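/- For all integers a, b ≥ 0, Σ_{i=0}^{a} Σ_{j=0}^{b} h_{a−i} h_{b−j} p_{i+j} = (b+1) h_a h_b + Σ_{i=1}^{a} (b − a + 2i) h_{a−i} h_{b+i}, where by convention p_0 = 1. -/

import Mathlib

open MvPolynomial Finset

/-- the power sum `p_k`, with the convention `p_0 = 1`. -/
noncomputable def pp (N k : ℕ) : MvPolynomial (Fin N) ℚ :=
  if k = 0 then 1 else psum (Fin N) ℚ k

noncomputable def M (N : ℕ) (m : Multiset (Fin N)) : MvPolynomial (Fin N) ℚ :=
  (m.map X).prod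

lemma M_add {N : ℕ} (s t : Multiset (Fin N)) : M N (s + t) = M N s * M N t := by
  simp [M]

lemma M_replicate {N k : ℕ} (x : Fin N) : M N (Multiset.replicate k x) = X x ^ k := by
  simp [M, Multiset.map_replicate]

noncomputable def msets (N n : ℕ) : Finset (Multiset (Fin N)) :=
  (univ : Finset (Sym (Fin N) n)).map ⟨fun s => s.1, Subtype.val_injective⟩

lemma mem_msets {N n : ℕ} {m : Multiset (Fin N)} : m ∈ msets N n ↔ Multiset.card m = n := by
  simp only [msets, Finset.mem_map, Finset.mem_univ, true_and, Function.Embedding.coeFn_mk]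
  exact ⟨fun ⟨s, hs⟩ => hs ▸ s.2, fun h => ⟨⟨m, h⟩, rfl⟩⟩

lemma hsymm_eq {N n : ℕ} : hsymm (Fin N) ℚ n = ∑ m ∈ msets N n, M N m := by
  rw [msets, Finset.sum_map]; rfl

lemma core {N : ℕ} (n : ℕ) (x : Fin N) :
    ∑ m ∈ Icc 1 n, ∑ t ∈ msets N (n - m), M N (Multiset.replicate m x + t)
      = ∑ t ∈ msets N n, ∑ m ∈ Icc 1 (t.count x), M N t := by
  rw [Finset.sum_sigma' (Icc 1 n) (fun m => msets N (n - m))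
      (fun m t => M N (Multiset.replicate m x + t)),
    Finset.sum_sigma' (msets N n) (fun t => Icc 1 (t.count x)) (fun t _ => M N t)]
  refine Finset.sum_nbij' (fun p => ⟨Multiset.replicate p.1 x + p.2, p.1⟩)
    (fun q => ⟨q.2, q.1 - Multiset.replicate q.2 x⟩) ?_ ?_ ?_ ?_ ?_
  · rintro ⟨m, t⟩ hp
    simp only [Finset.mem_sigma, Finset.mem_Icc, mem_msets] at hp ⊢
    obtain ⟨⟨hm1, hmn⟩, hcard⟩ := hp
    constructor
    · rw [Multiset.card_add, Multiset.card_replicate, hcard]; omega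
    · rw [Multiset.count_add, Multiset.count_replicate_self]; omega
  · rintro ⟨t, m⟩ hq
    simp only [Finset.mem_sigma, Finset.mem_Icc, mem_msets] at hq ⊢
    obtain ⟨hcard, hm1, hmc⟩ := hq
    have hle : Multiset.replicate m x ≤ t := Multiset.le_count_iff_replicate_le.mp hmc
    have hmn : m ≤ n := by
      have := (Multiset.count_le_card x t)
      omega
    refine ⟨⟨hm1, hmn⟩, ?_⟩
    rw [Multiset.card_sub hle, Multiset.card_replicate, hcard]
  · rintro ⟨m, t⟩ hp
    simp [add_tsub_cancel_left]
  · rintro ⟨t, m⟩ hq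
    simp only [Finset.mem_sigma, Finset.mem_Icc, mem_msets] at hq
    obtain ⟨hcard, hm1, hmc⟩ := hq
    have hle : Multiset.replicate m x ≤ t := Multiset.le_count_iff_replicate_le.mp hmc
    simp [add_tsub_cancel_of_le hle]
  · rintro ⟨m, t⟩ hp; rfl

lemma newton {N : ℕ} (n : ℕ) :
    ∑ m ∈ Icc 1 n, psum (Fin N) ℚ m * hsymm (Fin N) ℚ (n - m) = n • hsymm (Fin N) ℚ n := by
  have lhs1 : ∀ m, psum (Fin N) ℚ m * hsymm (Fin N) ℚ (n - m)
      = ∑ x : Fin N, ∑ t ∈ msets N (n - m), M N (Multiset.replicate m x + t) := by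
    intro m
    rw [psum, hsymm_eq, Finset.sum_mul]
    refine Finset.sum_congr rfl fun x _ => ?_
    rw [Finset.mul_sum]
    exact Finset.sum_congr rfl fun t _ => by rw [M_add, M_replicate]
  have onecount : ∀ x : Fin N, ∑ m ∈ Icc 1 n, ∑ t ∈ msets N (n - m), M N (Multiset.replicate m x + t)
      = ∑ t ∈ msets N n, (t.count x) • M N t := by
    intro x
    rw [core n x]
    refine Finset.sum_congr rfl fun t _ => ?_
    rw [Finset.sum_const, Nat.card_Icc]
    simp
  calc ∑ m ∈ Icc 1 n, psum (Fin N) ℚ m * hsymm (Fin N) ℚ (n - m)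
      = ∑ m ∈ Icc 1 n, ∑ x : Fin N, ∑ t ∈ msets N (n - m), M N (Multiset.replicate m x + t) :=
        Finset.sum_congr rfl fun m _ => lhs1 m
    _ = ∑ x : Fin N, ∑ m ∈ Icc 1 n, ∑ t ∈ msets N (n - m), M N (Multiset.replicate m x + t) :=
        Finset.sum_comm
    _ = ∑ x : Fin N, ∑ t ∈ msets N n, (t.count x) • M N t :=
        Finset.sum_congr rfl fun x _ => onecount x
    _ = ∑ t ∈ msets N n, ∑ x : Fin N, (t.count x) • M N t := Finset.sum_comm
    _ = n • hsymm (Fin N) ℚ n := by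
        rw [hsymm_eq, Finset.smul_sum]
        refine Finset.sum_congr rfl fun t ht => ?_
        rw [← Finset.sum_smul]
        congr 1
        rw [mem_msets] at ht
        rw [← ht, ← Multiset.toFinset_sum_count_eq]
        exact (Finset.sum_subset (Finset.subset_univ _) (fun y _ hy => by
          simpa using Multiset.count_eq_zero.mpr (by simpa using hy))).symm

lemma K {N : ℕ} (n : ℕ) :
    ∑ m ∈ range (n + 1), hsymm (Fin N) ℚ (n - m) * pp N m = (n + 1) • hsymm (Fin N) ℚ n := by
  rw [Finset.range_eq_Ico, Finset.sum_eq_sum_Ico_succ_bot (Nat.succ_pos n), Nat.succ_eq_add_one,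
    Finset.Ico_add_one_right_eq_Icc]
  have h0 : hsymm (Fin N) ℚ (n - 0) * pp N 0 = hsymm (Fin N) ℚ n := by simp [pp]
  rw [h0]
  have h1 : ∑ m ∈ Icc 1 n, hsymm (Fin N) ℚ (n - m) * pp N m
      = ∑ m ∈ Icc 1 n, psum (Fin N) ℚ m * hsymm (Fin N) ℚ (n - m) := by
    refine Finset.sum_congr rfl fun m hm => ?_
    rw [Finset.mem_Icc] at hm
    rw [pp, if_neg (by omega), mul_comm]
  rw [h1, newton, succ_nsmul, add_comm]

lemma Krev {N : ℕ} (n : ℕ) :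
    ∑ v ∈ range (n + 1), hsymm (Fin N) ℚ v * pp N (n - v) = (n + 1) • hsymm (Fin N) ℚ n := by
  rw [← K n, ← Finset.sum_range_reflect]
  refine Finset.sum_congr rfl fun j hj => ?_
  rw [Finset.mem_range, Nat.lt_succ_iff] at hj
  rw [show n + 1 - 1 - j = n - j from by omega, Nat.sub_sub_self hj]

lemma reflect1 {β : Type*} [AddCommMonoid β] (n : ℕ) (f g : ℕ → β)
    (h : ∀ u ≤ n, f (n - u) = g u) :
    ∑ i ∈ range (n + 1), f i = ∑ u ∈ range (n + 1), g u := by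
  conv_rhs => rw [← Finset.sum_range_reflect g (n + 1)]
  refine Finset.sum_congr rfl fun u hu => ?_
  rw [Finset.mem_range, Nat.lt_succ_iff] at hu
  rw [show n + 1 - 1 - u = n - u from by omega, ← h (n - u) (by omega), Nat.sub_sub_self hu]

lemma tri_comm {β : Type*} [AddCommMonoid β] (n : ℕ) (f : ℕ → ℕ → β) :
    ∑ u ∈ range n, ∑ w ∈ range (n - u), f u w
      = ∑ w ∈ range n, ∑ u ∈ range (n - w), f u w := by
  rw [Finset.sum_sigma' (range n) (fun u => range (n - u)) (fun u w => f u w),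
    Finset.sum_sigma' (range n) (fun w => range (n - w)) (fun w u => f u w)]
  refine Finset.sum_nbij' (fun p => ⟨p.2, p.1⟩) (fun p => ⟨p.2, p.1⟩) ?_ ?_ ?_ ?_ ?_
  · rintro ⟨u, w⟩ h; simp only [Finset.mem_sigma, Finset.mem_range] at *; omega
  · rintro ⟨w, u⟩ h; simp only [Finset.mem_sigma, Finset.mem_range] at *; omega
  · rintro ⟨u, w⟩ _; rfl
  · rintro ⟨w, u⟩ _; rfl
  · rintro ⟨u, w⟩ _; rfl

lemma stepB {N : ℕ} (a b u : ℕ) (hu : u ≤ a) :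
    ∑ v ∈ range (b + 1), hsymm (Fin N) ℚ v * pp N ((a - u) + (b - v))
      = (a - u + b + 1) • hsymm (Fin N) ℚ (a - u + b)
        - ∑ w ∈ range (a - u), hsymm (Fin N) ℚ (b + 1 + w) * pp N (a - u - 1 - w) := by
  set n := a - u + b with hn
  have hbn : b + 1 ≤ n + 1 := by omega
  have full := Krev (N := N) n
  rw [Finset.range_eq_Ico, ← Finset.sum_Ico_consecutive _ (Nat.zero_le (b + 1)) hbn,
    ← Finset.range_eq_Ico] at full
  have head : ∑ v ∈ range (b + 1), hsymm (Fin N) ℚ v * pp N (n - v)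
      = ∑ v ∈ range (b + 1), hsymm (Fin N) ℚ v * pp N ((a - u) + (b - v)) := by
    refine Finset.sum_congr rfl fun v hv => ?_
    rw [Finset.mem_range, Nat.lt_succ_iff] at hv
    congr 2
    omega
  have tailEq : ∑ v ∈ Ico (b + 1) (n + 1), hsymm (Fin N) ℚ v * pp N (n - v)
      = ∑ w ∈ range (a - u), hsymm (Fin N) ℚ (b + 1 + w) * pp N (a - u - 1 - w) := by
    rw [Finset.sum_Ico_eq_sum_range, show n + 1 - (b + 1) = a - u from by omega]
    refine Finset.sum_congr rfl fun w hw => ?_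
    rw [Finset.mem_range] at hw
    congr 2
    omega
  rw [head, tailEq] at full
  exact eq_sub_of_add_eq full

/-- For all `a, b ≥ 0`,
`Σ_{i=0}^{a} Σ_{j=0}^{b} h_{a−i} h_{b−j} p_{i+j}
  = (b+1) h_a h_b + Σ_{i=1}^{a} (b − a + 2i) h_{a−i} h_{b+i}` (with `p_0 = 1`). -/
theorem stmt2 (a b : ℕ) (N : ℕ) :
    ∑ i ∈ range (a + 1), ∑ j ∈ range (b + 1),
        hsymm (Fin N) ℚ (a - i) * hsymm (Fin N) ℚ (b - j) * pp N (i + j)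
      = (b + 1) • (hsymm (Fin N) ℚ a * hsymm (Fin N) ℚ b) +
        ∑ i ∈ Finset.Icc 1 a,
          ((b : ℤ) - (a : ℤ) + 2 * (i : ℤ)) •
            (hsymm (Fin N) ℚ (a - i) * hsymm (Fin N) ℚ (b + i)) := by
  set H : ℕ → MvPolynomial (Fin N) ℚ := hsymm (Fin N) ℚ with hH
  -- Step A: reflect both sums
  have stepA : ∑ i ∈ range (a + 1), ∑ j ∈ range (b + 1), H (a - i) * H (b - j) * pp N (i + j)
      = ∑ u ∈ range (a + 1), ∑ v ∈ range (b + 1), H u * (H v * pp N ((a - u) + (b - v))) := by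
    refine reflect1 a _ _ fun u hu => ?_
    refine reflect1 b _ _ fun v hv => ?_
    rw [Nat.sub_sub_self hu, Nat.sub_sub_self hv, mul_assoc]
  -- Step B applied pointwise
  have stepAB : ∑ i ∈ range (a + 1), ∑ j ∈ range (b + 1), H (a - i) * H (b - j) * pp N (i + j)
      = (∑ u ∈ range (a + 1), (a - u + b + 1) • (H u * H (a - u + b)))
        - ∑ u ∈ range (a + 1), ∑ w ∈ range (a - u),
            H u * (H (b + 1 + w) * pp N (a - u - 1 - w)) := by
    rw [stepA, ← Finset.sum_sub_distrib]
    refine Finset.sum_congr rfl fun u hu => ?_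
    rw [Finset.mem_range, Nat.lt_succ_iff] at hu
    rw [← Finset.mul_sum, stepB a b u hu, mul_sub, mul_smul_comm, Finset.mul_sum]
  rw [stepAB]
  -- S2: drop empty u = a term, swap, evaluate inner by Krev
  have S2a : ∑ u ∈ range (a + 1), ∑ w ∈ range (a - u),
        H u * (H (b + 1 + w) * pp N (a - u - 1 - w))
      = ∑ w ∈ range a, (a - w) • (H (a - 1 - w) * H (b + 1 + w)) := by
    rw [Finset.sum_range_succ, Nat.sub_self]
    simp only [Finset.range_zero, Finset.sum_empty, add_zero]
    rw [tri_comm]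
    refine Finset.sum_congr rfl fun w hw => ?_
    rw [Finset.mem_range] at hw
    have inner : ∑ u ∈ range (a - w), H u * (H (b + 1 + w) * pp N (a - u - 1 - w))
        = H (b + 1 + w) * ∑ u ∈ range ((a - 1 - w) + 1), H u * pp N ((a - 1 - w) - u) := by
      rw [Finset.mul_sum, show (a - 1 - w) + 1 = a - w from by omega]
      refine Finset.sum_congr rfl fun u hu => ?_
      rw [Finset.mem_range] at hu
      rw [show a - u - 1 - w = a - 1 - w - u from by omega]
      ring
    rw [inner, Krev, mul_smul_comm, show a - 1 - w + 1 = a - w from by omega, mul_comm]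
  -- S1 reindex
  have S1a : ∑ u ∈ range (a + 1), (a - u + b + 1) • (H u * H (a - u + b))
      = ∑ i ∈ range (a + 1), (b + 1 + i) • (H (a - i) * H (b + i)) := by
    refine reflect1 a _ _ fun i hi => ?_
    rw [Nat.sub_sub_self hi]
    rw [show i + b + 1 = b + 1 + i from by omega, show i + b = b + i from by omega]
  -- S2 reindex to Icc
  have S2b : ∑ w ∈ range a, (a - w) • (H (a - 1 - w) * H (b + 1 + w))
      = ∑ i ∈ Finset.Icc 1 a, (a + 1 - i) • (H (a - i) * H (b + i)) := by
    rw [← Finset.Ico_add_one_right_eq_Icc, Finset.sum_Ico_eq_sum_range, show a + 1 - 1 = a from rfl]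
    refine Finset.sum_congr rfl fun w hw => ?_
    rw [Finset.mem_range] at hw
    rw [show a + 1 - (1 + w) = a - w from by omega, show a - (1 + w) = a - 1 - w from by omega,
      show b + (1 + w) = b + 1 + w from by omega]
  -- S1 split off i = 0
  have S1b : ∑ i ∈ range (a + 1), (b + 1 + i) • (H (a - i) * H (b + i))
      = (b + 1) • (H a * H b)
        + ∑ i ∈ Finset.Icc 1 a, (b + 1 + i) • (H (a - i) * H (b + i)) := by
    rw [Finset.range_eq_Ico, Finset.sum_eq_sum_Ico_succ_bot (Nat.succ_pos a),
      Nat.succ_eq_add_one, Finset.Ico_add_one_right_eq_Icc]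
    simp
  rw [S2a, S1a, S2b, S1b, add_sub_assoc, ← Finset.sum_sub_distrib]
  congr 1
  refine Finset.sum_congr rfl fun i hi => ?_
  rw [Finset.mem_Icc] at hi
  rw [← natCast_zsmul (H (a - i) * H (b + i)) (b + 1 + i),
    ← natCast_zsmul (H (a - i) * H (b + i)) (a + 1 - i), ← sub_smul]
  congr 1
  omega
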